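/- Let R be a subring of a field K with Frac(R) = K, and suppose every antichain (under inclusion) in the poset of valuation subrings of K containing R has size at most n. Then the integral closure of R in K is an intersection of at most n valuation subrings of K. -/

import Mathlib

open IsLocalRing Polynomial

/-- The integral closure of a subring `R` of a field `K` is the intersection of
all valuation subrings of `K` containing `R`. -/
lemma aux_integralClosure_eq_iInter (K : Type*) [Field K] (R : Subring K) :
    (integralClosure R K : Set K) =
      ⋂ O ∈ {O : ValuationSubring K | (R : Set K) ⊆ (O : Set K)}, (O : Set K) := by
  ext x
  simp only [Set.mem_iInter, SetLike.mem_coe, Set.mem_setOf_eq]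
  constructor
  · rintro hx O hO
    obtain ⟨p, hp, hpx⟩ := (mem_integralClosure_iff R K).mp hx
    have hle : R ≤ O.toSubring := hO
    have : IsIntegral O.toSubring x := by
      refine ⟨p.map (Subring.inclusion hle), hp.map _, ?_⟩
      rw [Polynomial.eval₂_map]
      exact hpx
    exact LocalSubring.mem_of_isMax_of_isIntegral O.isMax_toLocalSubring this
  · intro H
    by_contra hx
    rw [mem_integralClosure_iff] at hx
    have hx0 : x ≠ 0 := fun e => hx (e ▸ isIntegral_zero)
    set B : Subring K := (Algebra.adjoin R ({x⁻¹} : Set K)).toSubring with hB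
    have hxinvB : x⁻¹ ∈ B := Algebra.self_mem_adjoin_singleton R _
    have hRB : R ≤ B := fun r hr => Subalgebra.algebraMap_mem _ (⟨r, hr⟩ : R)
    -- `x ∉ B`, since otherwise `x` would be integral over `R`.
    have hxB : x ∉ B := by
      intro hxB
      apply hx
      rw [hB, Subalgebra.mem_toSubring, Algebra.adjoin_singleton_eq_range_aeval] at hxB
      obtain ⟨q, hq⟩ := hxB
      replace hq : Polynomial.eval₂ (algebraMap R K) x⁻¹ q = x := hq
      have hinv : Invertible (x⁻¹) := (isUnit_iff_ne_zero.mpr (inv_ne_zero hx0)).invertible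
      have hrev := Polynomial.eval₂_reverse_mul_pow (algebraMap R K) x⁻¹ q
      rw [hq, invOf_eq_right_inv (inv_mul_cancel₀ hx0)] at hrev
      refine ⟨X ^ (q.natDegree + 1) - q.reverse, monic_X_pow_sub ?_, ?_⟩
      · exact lt_of_le_of_lt (Polynomial.degree_le_natDegree.trans
          (Nat.cast_le.mpr q.reverse_natDegree_le)) (by exact_mod_cast Nat.lt_succ_self _)
      · have : Polynomial.eval₂ (algebraMap R K) x q.reverse = x ^ (q.natDegree + 1) := by
          have := hrev
          field_simp at this ⊢
          rw [pow_succ]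
          have h1 : (x⁻¹) ^ q.natDegree * x ^ q.natDegree = 1 := by
            rw [← mul_pow, inv_mul_cancel₀ hx0, one_pow]
          linear_combination x ^ q.natDegree * this - Polynomial.eval₂ (algebraMap R K) x q.reverse * h1
        simp [Polynomial.eval₂_sub, this]
    -- `x⁻¹` is a nonunit of `B`.
    have hnonunit : (⟨x⁻¹, hxinvB⟩ : B) ∈ nonunits B := by
      intro hu
      obtain ⟨y, hy⟩ := isUnit_iff_exists_inv.mp hu
      apply hxB
      have h1 : x⁻¹ * (y : K) = 1 := congrArg Subtype.val hy
      have h2 : (y : K) = x := by field_simp at h1; exact h1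
      exact h2 ▸ y.2
    obtain ⟨M, hM, hxM⟩ := exists_max_ideal_of_mem_nonunits hnonunit
    have : M.IsPrime := hM.isPrime
    obtain ⟨O, hO⟩ := (LocalSubring.ofPrime B M).exists_le_valuationSubring
    have hBO : B ≤ O.toSubring := (LocalSubring.le_ofPrime B M).trans hO.1
    -- `R ⊆ O` but `x ∉ O`, contradiction with `H`.
    have hxO : x ∈ O := H O (fun r hr => hBO (hRB hr))
    -- `x⁻¹` is a unit of `O`
    have hunitO : IsUnit (Subring.inclusion hO.1
        (Subring.inclusion (LocalSubring.le_ofPrime B M) ⟨x⁻¹, hxinvB⟩)) := by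
      refine isUnit_iff_exists_inv.mpr ⟨⟨x, hxO⟩, Subtype.ext ?_⟩
      exact inv_mul_cancel₀ hx0
    have hunit := hO.2.1 _ hunitO
    have := (IsLocalization.AtPrime.isUnit_to_map_iff
      (LocalSubring.ofPrime B M).toSubring M (⟨x⁻¹, hxinvB⟩ : B)).mp hunit
    exact this hxM


/-- Let `R` be a subring of a field `K` with `Frac(R) = K`.  If every antichain in
the poset of valuation subrings of `K` containing `R` has size at most `n`, then
the integral closure of `R` in `K` is an intersection of at most `n` valuation
subrings of `K`. -/
theorem stmt_6 (K : Type*) [Field K] (R : Subring K) (n : ℕ)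
    (hfrac : ∀ x : K, ∃ a b : R, (b : K) ≠ 0 ∧ x = (a : K) / (b : K))
    (hanti : ∀ A : Finset (ValuationSubring K),
      (∀ O ∈ A, (R : Set K) ⊆ (O : Set K)) →
      (∀ O ∈ A, ∀ O' ∈ A, O ≠ O' → ¬ ((O : Set K) ⊆ (O' : Set K))) →
      A.card ≤ n) :
    ∃ s : Finset (ValuationSubring K), s.card ≤ n ∧
      (integralClosure R K : Set K) = ⋂ O ∈ s, (O : Set K) := by
  classical
  set S : Set (ValuationSubring K) := {O | (R : Set K) ⊆ (O : Set K)} with hS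
  -- every member of `S` contains a minimal member of `S`
  have hmin : ∀ O ∈ S, ∃ O', O' ≤ O ∧ Minimal (· ∈ S) O' := by
    intro O hO
    have ihb : ∀ c ⊆ S, IsChain (· ≤ ·) c → ∀ y ∈ c,
        ∃ lb ∈ S, ∀ z ∈ c, lb ≤ z := by
      intro c hcS hc y hyc
      set T : Subring K := sInf (ValuationSubring.toSubring '' c) with hT
      have hmemT : ∀ z : K, z ∈ T ↔ ∀ A ∈ c, z ∈ A := by
        intro z
        rw [hT, Subring.mem_sInf]
        constructor
        · intro h A hA; exact h A.toSubring ⟨A, hA, rfl⟩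
        · rintro h _ ⟨A, hA, rfl⟩; exact h A hA
      have hval : ∀ z : K, z ∈ T ∨ z⁻¹ ∈ T := by
        intro z
        by_cases hz : z ∈ T
        · exact Or.inl hz
        · right
          rw [hmemT] at hz
          push_neg at hz
          obtain ⟨A₁, hA₁c, hzA₁⟩ := hz
          rw [hmemT]
          intro A hAc
          rcases hc.total hA₁c hAc with h | h
          · exact h ((A₁.mem_or_inv_mem z).resolve_left hzA₁)
          · have : z ∉ A := fun hzA => hzA₁ (h hzA)
            exact (A.mem_or_inv_mem z).resolve_left this
      refine ⟨⟨T, hval⟩, ?_, ?_⟩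
      · intro r hr
        exact (hmemT r).mpr fun A hAc => hcS hAc hr
      · intro A hAc z hz
        exact (hmemT z).mp hz A hAc
    obtain ⟨m, hm1, hm2⟩ := zorn_le_nonempty₀ (α := (ValuationSubring K)ᵒᵈ) S
      (fun c hcS hc y hyc => by
        obtain ⟨lb, hlbS, hlb⟩ := ihb c hcS hc.symm y hyc
        exact ⟨lb, hlbS, fun z hz => hlb z hz⟩) O hO
    exact ⟨m, hm1, hm2.1, fun y hy hyx => hm2.2 hy hyx⟩
  set M : Set (ValuationSubring K) := {O | Minimal (· ∈ S) O} with hM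
  have hMS : M ⊆ S := fun O hO => hO.1
  have hpair : ∀ t : Finset (ValuationSubring K), ↑t ⊆ M →
      ∀ O ∈ t, ∀ O' ∈ t, O ≠ O' → ¬ ((O : Set K) ⊆ (O' : Set K)) := by
    intro t ht O hOt O' hO't hne hsub
    have hle : O ≤ O' := fun z hz => hsub hz
    have hle' : O' ≤ O := (ht hO't).2 (hMS (ht hOt)) hle
    exact hne (le_antisymm hle hle')
  have hcard : ∀ t : Finset (ValuationSubring K), ↑t ⊆ M → t.card ≤ n := by
    intro t ht
    exact hanti t (fun O hOt => hMS (ht hOt)) (hpair t ht)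
  have hMfin : M.Finite := by
    by_contra hinf
    obtain ⟨t, htM, htc⟩ := Set.Infinite.exists_subset_card_eq hinf (n + 1)
    have := hcard t htM
    omega
  refine ⟨hMfin.toFinset, ?_, ?_⟩
  · exact hcard _ (by simp)
  · rw [aux_integralClosure_eq_iInter]
    ext x
    simp only [Set.mem_iInter, SetLike.mem_coe, Set.mem_setOf_eq, Set.Finite.mem_toFinset]
    constructor
    · intro h O hO
      exact h O (hMS hO)
    · intro h O hOS
      obtain ⟨O', hle, hmin'⟩ := hmin O hOS
      exact hle (h O' hmin')
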